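/- (Extinction probability formula, equation (8).) For every n ≥ 1 and every i ≥ 1, the survival probability of the linear-fractional branching process started from a type-i particle satisfies 1 − φ_i^{(n)}(0) = (M^n 1ᵗ)_i / (1 + m^{(n)}), where 0 denotes the all-zeros sequence and m^{(n)} = m Σ_{k=0}^{n−1} g M^k 1ᵗ. Equivalently, H^{(n)} 1ᵗ = (1+m^{(n)})^{−1} M^n 1ᵗ, where H^{(n)} is the matrix with entries h_{ij}^{(n)} = (M^n)_{ij} − (m^{(n)}/(1+m^{(n)})) (M^n 1ᵗ)_i g_j^{(n)} and m^{(n)} g^{(n)} = m g (I + M + ⋯ + M^{n−1}). -/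

import Mathlib

open scoped ENNReal BigOperators
open Filter Topology

/-- Entrywise product of countable nonnegative matrices. -/
noncomputable def matmul (A B : ℕ → ℕ → ℝ≥0∞) : ℕ → ℕ → ℝ≥0∞ :=
  fun i j => ∑' k, A i k * B k j

/-- Entrywise powers of a countable nonnegative matrix (`matpow A 0 = I`). -/
noncomputable def matpow (A : ℕ → ℕ → ℝ≥0∞) : ℕ → ℕ → ℕ → ℝ≥0∞
  | 0 => fun i j => if i = j then 1 else 0
  | n + 1 => matmul A (matpow A n)

/-- The mean matrix `M = H + m H 1ᵗ g`, i.e. `m_{ij} = h_{ij} + m (Σ_l h_{il}) g_j`. -/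
noncomputable def meanM (H : ℕ → ℕ → ℝ≥0∞) (g : ℕ → ℝ≥0∞) (m : ℝ≥0∞) : ℕ → ℕ → ℝ≥0∞ :=
  fun i j => H i j + m * (∑' l, H i l) * g j

/-- `φ_i(s) = h_{i0} + (Σ_j h_{ij} s_j)/(1 + m - m Σ_j g_j s_j)`. -/
noncomputable def phi (H : ℕ → ℕ → ℝ≥0∞) (g : ℕ → ℝ≥0∞) (m : ℝ≥0∞)
    (i : ℕ) (s : ℕ → ℝ≥0∞) : ℝ≥0∞ :=
  (1 - ∑' j, H i j) + (∑' j, H i j * s j) / (1 + m - m * ∑' j, g j * s j)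

/-- The iterates `φ_i^{(n)}`, with `φ^{(0)} = id` and `φ^{(n)} = φ ∘ φ^{(n-1)}`. -/
noncomputable def phiIter (H : ℕ → ℕ → ℝ≥0∞) (g : ℕ → ℝ≥0∞) (m : ℝ≥0∞) :
    ℕ → (ℕ → ℝ≥0∞) → ℕ → ℝ≥0∞
  | 0, s => s
  | n + 1, s => fun i => phi H g m i (phiIter H g m n s)

/-- `m^{(n)} = m Σ_{k=0}^{n-1} g M^k 1ᵗ`. -/
noncomputable def mseq (H : ℕ → ℕ → ℝ≥0∞) (g : ℕ → ℝ≥0∞) (m : ℝ≥0∞) (n : ℕ) : ℝ≥0∞ :=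
  m * ∑ k ∈ Finset.range n, ∑' i, g i * ∑' j, matpow (meanM H g m) k i j

/-- `g^{(n)}`, characterized by `m^{(n)} g^{(n)} = m g (I + M + ⋯ + M^{n-1})`. -/
noncomputable def gseq (H : ℕ → ℕ → ℝ≥0∞) (g : ℕ → ℝ≥0∞) (m : ℝ≥0∞) (n j : ℕ) : ℝ≥0∞ :=
  (m * ∑ k ∈ Finset.range n, ∑' i, g i * matpow (meanM H g m) k i j) / mseq H g m n

/-- `h_{ij}^{(n)} = (M^n)_{ij} - (m^{(n)}/(1+m^{(n)})) (M^n 1ᵗ)_i g_j^{(n)}`. -/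
noncomputable def Hseq (H : ℕ → ℕ → ℝ≥0∞) (g : ℕ → ℝ≥0∞) (m : ℝ≥0∞) (n i j : ℕ) : ℝ≥0∞ :=
  matpow (meanM H g m) n i j -
    mseq H g m n / (1 + mseq H g m n) * (∑' l, matpow (meanM H g m) n i l) * gseq H g m n j

namespace LFProof

variable (H : ℕ → ℕ → ℝ≥0∞) (g : ℕ → ℝ≥0∞) (m : ℝ≥0∞)

/-- Row sums of `M^n`. -/
noncomputable def R (n i : ℕ) : ℝ≥0∞ := ∑' j, matpow (meanM H g m) n i j

/-- Row sums of `H`. -/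
noncomputable def U (i : ℕ) : ℝ≥0∞ := ∑' j, H i j

/-- `a_n = g M^n` (a row vector). -/
noncomputable def aa (n j : ℕ) : ℝ≥0∞ := ∑' i, g i * matpow (meanM H g m) n i j

/-- `A_n = g M^n 1ᵗ`. -/
noncomputable def AA (n : ℕ) : ℝ≥0∞ := ∑' i, g i * R H g m n i

/-- `σ_n = m Σ_{k<n} g M^k = m^{(n)} g^{(n)}`. -/
noncomputable def ss (n j : ℕ) : ℝ≥0∞ := m * ∑ k ∈ Finset.range n, aa H g m k j

lemma U_eq (i : ℕ) : U H i = ∑' l, H i l := rfl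

lemma meanM_apply (i j : ℕ) : meanM H g m i j = H i j + m * U H i * g j := rfl

lemma matpow_succ_apply (n i j : ℕ) :
    matpow (meanM H g m) (n+1) i j = ∑' l, meanM H g m i l * matpow (meanM H g m) n l j := rfl

lemma tsum_M_mul (i : ℕ) (f : ℕ → ℝ≥0∞) :
    ∑' l, meanM H g m i l * f l
      = (∑' l, H i l * f l) + m * U H i * ∑' l, g l * f l := by
  calc ∑' l, meanM H g m i l * f l
      = ∑' l, (H i l * f l + (m * U H i) * (g l * f l)) :=
        tsum_congr fun l => by rw [meanM_apply]; ring
    _ = _ := by rw [ENNReal.tsum_add, ENNReal.tsum_mul_left]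

lemma R_zero (i : ℕ) : R H g m 0 i = 1 := by
  have h : ∀ j, matpow (meanM H g m) 0 i j = if j = i then (1:ℝ≥0∞) else 0 := by
    intro j; simp [matpow, eq_comm]
  rw [R, tsum_congr h, tsum_ite_eq]

lemma R_succ (n i : ℕ) : R H g m (n+1) i = ∑' l, meanM H g m i l * R H g m n l := by
  rw [R]
  calc ∑' j, matpow (meanM H g m) (n+1) i j
      = ∑' j, ∑' l, meanM H g m i l * matpow (meanM H g m) n l j := rfl
    _ = ∑' l, ∑' j, meanM H g m i l * matpow (meanM H g m) n l j := ENNReal.tsum_comm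
    _ = ∑' l, meanM H g m i l * R H g m n l := tsum_congr fun l => ENNReal.tsum_mul_left

lemma AA_zero (hg : ∑' j, g j = 1) : AA H g m 0 = 1 := by
  rw [AA, tsum_congr fun i => by rw [R_zero, mul_one], hg]

lemma AA_eq_tsum_aa (n : ℕ) : AA H g m n = ∑' j, aa H g m n j := by
  calc AA H g m n = ∑' i, ∑' j, g i * matpow (meanM H g m) n i j :=
        tsum_congr fun i => ENNReal.tsum_mul_left.symm
    _ = ∑' j, aa H g m n j := ENNReal.tsum_comm

lemma mseq_eq (n : ℕ) : mseq H g m n = m * ∑ k ∈ Finset.range n, AA H g m k := rfl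

lemma mseq_zero : mseq H g m 0 = 0 := by simp [mseq_eq]

lemma mseq_succ (n : ℕ) :
    mseq H g m (n+1) = mseq H g m n + m * AA H g m n := by
  rw [mseq_eq, mseq_eq, Finset.sum_range_succ, mul_add]

lemma ss_zero (j : ℕ) : ss H g m 0 j = 0 := by simp [ss]

lemma ss_succ (n j : ℕ) : ss H g m (n+1) j = ss H g m n j + m * aa H g m n j := by
  rw [ss, ss, Finset.sum_range_succ, mul_add]

lemma tsum_ss (n : ℕ) : ∑' j, ss H g m n j = mseq H g m n := by
  rw [mseq_eq]
  calc ∑' j, ss H g m n j = m * ∑' j, ∑ k ∈ Finset.range n, aa H g m k j :=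
        ENNReal.tsum_mul_left
    _ = m * ∑ k ∈ Finset.range n, ∑' j, aa H g m k j := by
        rw [Summable.tsum_finsetSum fun k _ => ENNReal.summable]
    _ = m * ∑ k ∈ Finset.range n, AA H g m k := by
        simp_rw [← AA_eq_tsum_aa]

section bounds

variable (hH : ∀ i, ∑' j, H i j ≤ 1) (hg : ∑' j, g j = 1) (hm' : m ≠ ⊤)

include hH hg in
lemma R_le_pow (n i : ℕ) : R H g m n i ≤ (1 + m) ^ n := by
  induction n generalizing i with
  | zero => simp [R_zero]
  | succ n ih =>
    rw [R_succ, pow_succ]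
    calc ∑' l, meanM H g m i l * R H g m n l
        ≤ ∑' l, meanM H g m i l * (1 + m) ^ n :=
          ENNReal.tsum_le_tsum fun l => mul_le_mul_right (ih l) _
      _ = ((∑' l, H i l) + m * U H i * (∑' l, g l)) * (1 + m) ^ n := by
          rw [tsum_M_mul, ENNReal.tsum_mul_right, ENNReal.tsum_mul_right]; ring
      _ ≤ (1 + m * 1 * 1) * (1 + m) ^ n := by
          gcongr
          · exact hH i
          · rw [U_eq]; exact hH i
          · exact le_of_eq hg
      _ = (1 + m) ^ n * (1 + m) := by ring

include hH hg hm' in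
lemma mseq_ne_top (n : ℕ) : mseq H g m n ≠ ⊤ := by
  rw [mseq_eq]
  refine ENNReal.mul_ne_top hm' (ENNReal.sum_ne_top.2 fun k _ => ?_)
  have hAk : AA H g m k ≤ (1 + m) ^ k := by
    calc AA H g m k ≤ ∑' i, g i * (1 + m) ^ k :=
          ENNReal.tsum_le_tsum fun i => mul_le_mul_right (R_le_pow H g m hH hg k i) _
      _ = (1 + m) ^ k := by rw [ENNReal.tsum_mul_right, hg, one_mul]
  exact ne_top_of_le_ne_top (ENNReal.pow_ne_top (by simp [hm'])) hAk

lemma T_ne_zero (n : ℕ) : 1 + mseq H g m n ≠ 0 := by simp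

include hH hg hm' in
lemma T_ne_top (n : ℕ) : 1 + mseq H g m n ≠ ⊤ :=
  ENNReal.add_ne_top.2 ⟨ENNReal.one_ne_top, mseq_ne_top H g m hH hg hm' n⟩

include hH in
lemma R_le_T (n i : ℕ) : R H g m n i ≤ 1 + mseq H g m n := by
  induction n generalizing i with
  | zero => simp [R_zero, mseq_zero]
  | succ n ih =>
    rw [R_succ, tsum_M_mul, mseq_succ]
    have h1 : ∑' l, H i l * R H g m n l ≤ 1 + mseq H g m n := by
      calc ∑' l, H i l * R H g m n l
          ≤ ∑' l, H i l * (1 + mseq H g m n) :=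
            ENNReal.tsum_le_tsum fun l => mul_le_mul_right (ih l) _
        _ = (∑' l, H i l) * (1 + mseq H g m n) := ENNReal.tsum_mul_right
        _ ≤ 1 * (1 + mseq H g m n) := mul_le_mul_left (hH i) _
        _ = 1 + mseq H g m n := one_mul _
    have h2 : m * U H i * ∑' l, g l * R H g m n l ≤ m * AA H g m n := by
      have hU1 : U H i ≤ 1 := hH i
      calc m * U H i * ∑' l, g l * R H g m n l
          ≤ m * 1 * AA H g m n := by
            refine mul_le_mul' (mul_le_mul_right hU1 m) ?_
            exact le_of_eq rfl
        _ = m * AA H g m n := by rw [mul_one]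
    calc (∑' l, H i l * R H g m n l) + m * U H i * ∑' l, g l * R H g m n l
        ≤ (1 + mseq H g m n) + m * AA H g m n := add_le_add h1 h2
      _ = 1 + (mseq H g m n + m * AA H g m n) := by ring

end bounds

section key

variable (hH : ∀ i, ∑' j, H i j ≤ 1) (hg : ∑' j, g j = 1) (hm' : m ≠ ⊤)

include hH hg hm' in
lemma lemB (n : ℕ)
    (hKEY : ∀ l j, R H g m n l * ss H g m n j ≤ (1 + mseq H g m n) * matpow (meanM H g m) n l j)
    (l j : ℕ) :
    R H g m n l * aa H g m n j + AA H g m n * ss H g m n j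
      ≤ (1 + mseq H g m n) * aa H g m n j + AA H g m n * matpow (meanM H g m) n l j := by
  have hT0 : 1 + mseq H g m n ≠ 0 := T_ne_zero H g m n
  have hTtop : 1 + mseq H g m n ≠ ⊤ := T_ne_top H g m hH hg hm' n
  set T := 1 + mseq H g m n with hT
  set c := ss H g m n j / T with hc
  set D := fun l' => matpow (meanM H g m) n l' j - R H g m n l' * c with hD
  have hPle : ∀ l', R H g m n l' * c ≤ matpow (meanM H g m) n l' j := by
    intro l'
    rw [hc, ← mul_div_assoc]
    exact ENNReal.div_le_of_le_mul ((hKEY l' j).trans (le_of_eq (mul_comm _ _)))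
  have hP : ∀ l', matpow (meanM H g m) n l' j = D l' + R H g m n l' * c :=
    fun l' => (tsub_add_cancel_of_le (hPle l')).symm
  have hssc : ss H g m n j = T * c := by
    rw [hc, ENNReal.mul_div_cancel hT0 hTtop]
  have ha : aa H g m n j = (∑' l', g l' * D l') + AA H g m n * c := by
    calc aa H g m n j = ∑' l', g l' * (D l' + R H g m n l' * c) :=
          tsum_congr fun l' => by rw [← hP l']
      _ = (∑' l', g l' * D l') + ∑' l', (g l' * R H g m n l') * c := by
          rw [← ENNReal.tsum_add]
          exact tsum_congr fun l' => by ring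
      _ = (∑' l', g l' * D l') + AA H g m n * c := by
          rw [ENNReal.tsum_mul_right]; rfl
  have hF : R H g m n l ≤ T := R_le_T H g m hH n l
  rw [ha, hP l, hssc]
  set gD := ∑' l', g l' * D l' with hgD
  calc R H g m n l * (gD + AA H g m n * c) + AA H g m n * (T * c)
      = R H g m n l * gD + (R H g m n l * (AA H g m n * c) + AA H g m n * (T * c)) := by ring
    _ ≤ (T * gD + AA H g m n * D l)
          + (R H g m n l * (AA H g m n * c) + AA H g m n * (T * c)) :=
        add_le_add_left ((mul_le_mul_left hF gD).trans le_self_add) _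
    _ = T * (gD + AA H g m n * c) + AA H g m n * (D l + R H g m n l * c) := by ring

include hH hg hm' in
lemma key (n : ℕ) :
    ∀ i j, R H g m n i * ss H g m n j ≤ (1 + mseq H g m n) * matpow (meanM H g m) n i j := by
  induction n with
  | zero => intro i j; simp [ss_zero]
  | succ n ih =>
    intro i j
    have hT0 : 1 + mseq H g m n ≠ 0 := T_ne_zero H g m n
    have hTtop : 1 + mseq H g m n ≠ ⊤ := T_ne_top H g m hH hg hm' n
    have hB := lemB H g m hH hg hm' n ih
    have hR' : R H g m (n+1) i
        = (∑' l, H i l * R H g m n l) + m * U H i * AA H g m n := by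
      rw [R_succ, tsum_M_mul]; rfl
    have hP' : matpow (meanM H g m) (n+1) i j
        = (∑' l, H i l * matpow (meanM H g m) n l j) + m * U H i * aa H g m n j := by
      rw [matpow_succ_apply, tsum_M_mul]; rfl
    have hs' : ss H g m (n+1) j = ss H g m n j + m * aa H g m n j := ss_succ H g m n j
    have hT' : 1 + mseq H g m (n+1) = (1 + mseq H g m n) + m * AA H g m n := by
      rw [mseq_succ]; ring
    rw [hR', hP', hs', hT']
    set T := 1 + mseq H g m n with hT
    set HR := ∑' l, H i l * R H g m n l with hHR
    set HP := ∑' l, H i l * matpow (meanM H g m) n l j with hHP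
    set u := U H i with hu
    set A := AA H g m n with hA
    set av := aa H g m n j with hav
    set sv := ss H g m n j with hsv
    have h1 : HR * sv ≤ T * HP := by
      calc HR * sv = ∑' l, (H i l * R H g m n l) * sv := by
            rw [hHR, ENNReal.tsum_mul_right]
        _ ≤ ∑' l, T * (H i l * matpow (meanM H g m) n l j) :=
            ENNReal.tsum_le_tsum fun l => by
              calc (H i l * R H g m n l) * sv = H i l * (R H g m n l * sv) := by ring
                _ ≤ H i l * (T * matpow (meanM H g m) n l j) :=
                    mul_le_mul_right (ih l j) _
                _ = T * (H i l * matpow (meanM H g m) n l j) := by ring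
        _ = T * HP := by rw [hHP, ENNReal.tsum_mul_left]
    have h2 : HR * av + u * (A * sv) ≤ T * (u * av) + A * HP := by
      have lhs_eq : HR * av + u * (A * sv)
          = ∑' l, H i l * (R H g m n l * av + A * sv) := by
        calc HR * av + u * (A * sv)
            = (∑' l, (H i l * R H g m n l) * av) + ∑' l, H i l * (A * sv) := by
              rw [ENNReal.tsum_mul_right, ENNReal.tsum_mul_right, ← hHR]
              rfl
          _ = ∑' l, ((H i l * R H g m n l) * av + H i l * (A * sv)) :=
              (ENNReal.tsum_add).symm
          _ = ∑' l, H i l * (R H g m n l * av + A * sv) :=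
              tsum_congr fun l => by ring
      have rhs_eq : (∑' l, H i l * (T * av + A * matpow (meanM H g m) n l j))
          = T * (u * av) + A * HP := by
        calc ∑' l, H i l * (T * av + A * matpow (meanM H g m) n l j)
            = ∑' l, (H i l * (T * av) + A * (H i l * matpow (meanM H g m) n l j)) :=
              tsum_congr fun l => by ring
          _ = (∑' l, H i l * (T * av)) + ∑' l, A * (H i l * matpow (meanM H g m) n l j) :=
              ENNReal.tsum_add
          _ = (∑' l, H i l) * (T * av) + A * HP := by
              rw [ENNReal.tsum_mul_right, ENNReal.tsum_mul_left, hHP]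
          _ = T * (u * av) + A * HP := by
              rw [hu, U_eq]; ring
      rw [lhs_eq, ← rhs_eq]
      exact ENNReal.tsum_le_tsum fun l => mul_le_mul_right (hB l j) _
    have main : T * ((HR + m * u * A) * (sv + m * av))
        ≤ T * ((T + m * A) * (HP + m * u * av)) := by
      calc T * ((HR + m * u * A) * (sv + m * av))
          = T * (HR * sv) + (m * T) * (HR * av + u * (A * sv))
              + (m * m * T) * (u * (A * av)) := by ring
        _ ≤ T * (T * HP) + (m * T) * (T * (u * av) + A * HP)
              + (m * m * T) * (u * (A * av)) := by
            exact add_le_add (add_le_add (mul_le_mul_right h1 T)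
              (mul_le_mul_right h2 (m * T))) le_rfl
        _ = T * ((T + m * A) * (HP + m * u * av)) := by ring
    exact (ENNReal.mul_le_mul_iff_right hT0 hTtop).mp main

end key

section parts

variable (hH : ∀ i, ∑' j, H i j ≤ 1) (hg : ∑' j, g j = 1) (hm' : m ≠ ⊤)

include hH hg hm' in
lemma part1 (n : ℕ) :
    (∀ j, phiIter H g m n (fun _ => 0) j ≤ 1) ∧
    (∀ i, 1 - phiIter H g m n (fun _ => 0) i = R H g m n i / (1 + mseq H g m n)) := by
  induction n with
  | zero =>
    refine ⟨fun j => by simp [phiIter], fun i => by simp [phiIter, R_zero, mseq_zero]⟩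
  | succ n ih =>
    obtain ⟨hs1, hsq⟩ := ih
    have hT0 : 1 + mseq H g m n ≠ 0 := T_ne_zero H g m n
    have hTtop : 1 + mseq H g m n ≠ ⊤ := T_ne_top H g m hH hg hm' n
    set T := 1 + mseq H g m n with hT
    set s := phiIter H g m n (fun _ => 0) with hs
    set q := fun j => R H g m n j / T with hq
    have hq1 : ∀ j, q j ≤ 1 := fun j => by
      rw [hq]; dsimp only; rw [← hsq j]; exact tsub_le_self
    have hs_eq : ∀ j, s j = 1 - q j := fun j => by
      rw [hq]; dsimp only; rw [← hsq j]
      exact (ENNReal.sub_sub_cancel ENNReal.one_ne_top (hs1 j)).symm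
    have hqT : ∀ j, q j * T = R H g m n j := fun j =>
      ENNReal.div_mul_cancel hT0 hTtop
    set G := ∑' j, g j * q j with hG
    have hGle : G ≤ 1 := by
      rw [hG]
      calc ∑' j, g j * q j ≤ ∑' j, g j * 1 :=
            ENNReal.tsum_le_tsum fun j => mul_le_mul_right (hq1 j) _
        _ = 1 := by simpa using hg
    have hGtop : G ≠ ⊤ := ne_top_of_le_ne_top ENNReal.one_ne_top hGle
    have hgs : ∑' j, g j * s j = 1 - G := by
      refine ENNReal.eq_sub_of_add_eq hGtop ?_
      rw [hG, ← ENNReal.tsum_add]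
      calc ∑' j, (g j * s j + g j * q j)
          = ∑' j, g j * (s j + q j) := tsum_congr fun j => (mul_add _ _ _).symm
        _ = ∑' j, g j * 1 := tsum_congr fun j => by
            rw [hs_eq j, tsub_add_cancel_of_le (hq1 j)]
        _ = 1 := by simpa using hg
    have hden : 1 + m - m * ∑' j, g j * s j = 1 + m * G := by
      rw [hgs]
      have h1 : m * G + m * (1 - G) = m := by
        rw [← mul_add, add_tsub_cancel_of_le hGle, mul_one]
      refine ENNReal.sub_eq_of_eq_add
        (ENNReal.mul_ne_top hm' (ne_top_of_le_ne_top ENNReal.one_ne_top tsub_le_self)) ?_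
      rw [add_assoc, h1]
    have hD0 : 1 + m * G ≠ 0 := by simp
    have hDtop : 1 + m * G ≠ ⊤ :=
      ENNReal.add_ne_top.2 ⟨ENNReal.one_ne_top, ENNReal.mul_ne_top hm' hGtop⟩
    set W := fun i => ∑' j, H i j * q j with hW
    have hWle : ∀ i, W i ≤ U H i := fun i => by
      rw [hW]; dsimp only; rw [U_eq]
      calc ∑' j, H i j * q j ≤ ∑' j, H i j * 1 :=
            ENNReal.tsum_le_tsum fun j => mul_le_mul_right (hq1 j) _
        _ = ∑' j, H i j := by simp
    have hU1 : ∀ i, U H i ≤ 1 := fun i => hH i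
    have hWtop : ∀ i, W i ≠ ⊤ := fun i =>
      ne_top_of_le_ne_top ENNReal.one_ne_top ((hWle i).trans (hU1 i))
    have hHs : ∀ i, ∑' j, H i j * s j = U H i - W i := by
      intro i
      refine ENNReal.eq_sub_of_add_eq (hWtop i) ?_
      rw [hW]; dsimp only; rw [← ENNReal.tsum_add]
      calc ∑' j, (H i j * s j + H i j * q j)
          = ∑' j, H i j * (s j + q j) := tsum_congr fun j => (mul_add _ _ _).symm
        _ = ∑' j, H i j * 1 := tsum_congr fun j => by
            rw [hs_eq j, tsub_add_cancel_of_le (hq1 j)]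
        _ = U H i := by rw [U_eq]; simp
    have hval : ∀ i, phiIter H g m (n+1) (fun _ => 0) i
        = (1 - U H i) + (U H i - W i) / (1 + m * G) := by
      intro i
      show phi H g m i s = _
      rw [phi, hHs i, hden]
      rfl
    have hfrac : ∀ i, (U H i - W i) / (1 + m * G) ≤ U H i := by
      intro i
      refine ENNReal.div_le_of_le_mul ?_
      calc U H i - W i ≤ U H i := tsub_le_self
        _ = U H i * 1 := (mul_one _).symm
        _ ≤ U H i * (1 + m * G) := mul_le_mul_right le_self_add _
    have hle1 : ∀ i, phiIter H g m (n+1) (fun _ => 0) i ≤ 1 := by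
      intro i
      rw [hval i]
      calc (1 - U H i) + (U H i - W i) / (1 + m * G)
          ≤ (1 - U H i) + U H i := add_le_add_right (hfrac i) _
        _ = 1 := tsub_add_cancel_of_le (hU1 i)
    refine ⟨hle1, fun i => ?_⟩
    -- compute 1 - phi
    have hXY : (m * G * U H i + W i) / (1 + m * G) + phiIter H g m (n+1) (fun _ => 0) i = 1 := by
      rw [hval i]
      have hcomb : (m * G * U H i + W i) / (1 + m * G) + (U H i - W i) / (1 + m * G)
          = U H i := by
        rw [ENNReal.div_add_div_same]
        have : m * G * U H i + W i + (U H i - W i) = U H i * (1 + m * G) := by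
          rw [add_assoc, add_tsub_cancel_of_le (hWle i)]; ring
        rw [this, mul_div_assoc, ENNReal.div_self hD0 hDtop, mul_one]
      calc (m * G * U H i + W i) / (1 + m * G) + ((1 - U H i) + (U H i - W i) / (1 + m * G))
          = (1 - U H i) + ((m * G * U H i + W i) / (1 + m * G) + (U H i - W i) / (1 + m * G)) := by
            ring
        _ = (1 - U H i) + U H i := by rw [hcomb]
        _ = 1 := tsub_add_cancel_of_le (hU1 i)
    have hsub : 1 - phiIter H g m (n+1) (fun _ => 0) i
        = (m * G * U H i + W i) / (1 + m * G) :=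
      ENNReal.sub_eq_of_eq_add (ne_top_of_le_ne_top ENNReal.one_ne_top (hle1 i)) hXY.symm
    -- compute R (n+1) / T (n+1)
    have hRW : ∑' l, H i l * R H g m n l = W i * T := by
      calc ∑' l, H i l * R H g m n l
          = ∑' l, (H i l * q l) * T := tsum_congr fun l => by rw [← hqT l, mul_assoc]
        _ = W i * T := by rw [ENNReal.tsum_mul_right]
    have hAG : AA H g m n = G * T := by
      rw [AA, hG]
      calc ∑' l, g l * R H g m n l
          = ∑' l, (g l * q l) * T := tsum_congr fun l => by rw [← hqT l, mul_assoc]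
        _ = (∑' j, g j * q j) * T := ENNReal.tsum_mul_right
    have hRsucc : R H g m (n+1) i = (m * G * U H i + W i) * T := by
      rw [R_succ, tsum_M_mul, hRW, show (∑' l, g l * R H g m n l) = G * T from by
        rw [← hAG]; rfl]
      ring
    have hTsucc : 1 + mseq H g m (n+1) = (1 + m * G) * T := by
      rw [mseq_succ, hAG, ← add_assoc, ← hT]; ring
    rw [hsub, hRsucc, hTsucc, ENNReal.mul_div_mul_right _ _ hT0 hTtop]

include hH hg hm' in
lemma part2 (n : ℕ) (hn : mseq H g m n ≠ 0) (i : ℕ) :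
    ∑' j, Hseq H g m n i j = R H g m n i / (1 + mseq H g m n) := by
  have hT0 : 1 + mseq H g m n ≠ 0 := T_ne_zero H g m n
  have hTtop : 1 + mseq H g m n ≠ ⊤ := T_ne_top H g m hH hg hm' n
  have hmtop : mseq H g m n ≠ ⊤ := mseq_ne_top H g m hH hg hm' n
  have hRtop : R H g m n i ≠ ⊤ :=
    ne_top_of_le_ne_top hTtop (R_le_T H g m hH n i)
  have hgseq : ∀ j, gseq H g m n j = ss H g m n j / mseq H g m n := fun j => rfl
  have hHseq : ∀ j, Hseq H g m n i j
      = matpow (meanM H g m) n i j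
        - R H g m n i * ss H g m n j / (1 + mseq H g m n) := by
    intro j
    show matpow (meanM H g m) n i j
        - mseq H g m n / (1 + mseq H g m n) * (∑' l, matpow (meanM H g m) n i l)
            * gseq H g m n j = _
    congr 1
    rw [hgseq j, show (∑' l, matpow (meanM H g m) n i l) = R H g m n i from rfl,
      div_eq_mul_inv, div_eq_mul_inv, div_eq_mul_inv]
    rw [show mseq H g m n * (1 + mseq H g m n)⁻¹ * R H g m n i
          * (ss H g m n j * (mseq H g m n)⁻¹)
        = (mseq H g m n * (mseq H g m n)⁻¹)
          * (R H g m n i * ss H g m n j * (1 + mseq H g m n)⁻¹) from by ring,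
      ENNReal.mul_inv_cancel hn hmtop, one_mul]
  have hle : ∀ j, R H g m n i * ss H g m n j / (1 + mseq H g m n)
      ≤ matpow (meanM H g m) n i j := fun j =>
    ENNReal.div_le_of_le_mul ((key H g m hH hg hm' n i j).trans (le_of_eq (mul_comm _ _)))
  have hsum2 : ∑' j, R H g m n i * ss H g m n j / (1 + mseq H g m n)
      = R H g m n i / (1 + mseq H g m n) * mseq H g m n := by
    calc ∑' j, R H g m n i * ss H g m n j / (1 + mseq H g m n)
        = ∑' j, (R H g m n i / (1 + mseq H g m n)) * ss H g m n j :=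
          tsum_congr fun j => by rw [div_eq_mul_inv, div_eq_mul_inv]; ring
      _ = _ := by rw [ENNReal.tsum_mul_left, tsum_ss]
  have hfin : (∑' j, R H g m n i * ss H g m n j / (1 + mseq H g m n)) ≠ ⊤ := by
    rw [hsum2]
    exact ENNReal.mul_ne_top
      (by rw [div_eq_mul_inv]
          exact ENNReal.mul_ne_top hRtop (ENNReal.inv_ne_top.2 hT0)) hmtop
  calc ∑' j, Hseq H g m n i j
      = ∑' j, (matpow (meanM H g m) n i j
          - R H g m n i * ss H g m n j / (1 + mseq H g m n)) := tsum_congr hHseq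
    _ = (∑' j, matpow (meanM H g m) n i j)
          - ∑' j, R H g m n i * ss H g m n j / (1 + mseq H g m n) :=
        ENNReal.tsum_sub hfin hle
    _ = R H g m n i - R H g m n i / (1 + mseq H g m n) * mseq H g m n := by
        rw [hsum2]; rfl
    _ = R H g m n i / (1 + mseq H g m n) := by
        refine ENNReal.sub_eq_of_eq_add (by rw [← hsum2]; exact hfin) ?_
        calc R H g m n i
            = R H g m n i / (1 + mseq H g m n) * (1 + mseq H g m n) :=
              (ENNReal.div_mul_cancel hT0 hTtop).symm
          _ = R H g m n i / (1 + mseq H g m n)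
              + R H g m n i / (1 + mseq H g m n) * mseq H g m n := by ring

end parts

end LFProof

theorem lf_survival_probability_formula
    (H : ℕ → ℕ → ℝ≥0∞) (g : ℕ → ℝ≥0∞) (m : ℝ≥0∞)
    (hH : ∀ i, ∑' j, H i j ≤ 1) (hg : ∑' j, g j = 1) (hm : 0 < m) (hm' : m ≠ ⊤) :
    ∀ n : ℕ, 1 ≤ n → ∀ i : ℕ,
      1 - phiIter H g m n (fun _ => 0) i
        = (∑' j, matpow (meanM H g m) n i j) / (1 + mseq H g m n) ∧
      (∑' j, Hseq H g m n i j)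
        = (∑' j, matpow (meanM H g m) n i j) / (1 + mseq H g m n) := by
  intro n hn i
  have hne0 : mseq H g m n ≠ 0 := by
    have h1 : (1:ℝ≥0∞) ≤ ∑ k ∈ Finset.range n, LFProof.AA H g m k := by
      calc (1:ℝ≥0∞) = LFProof.AA H g m 0 := (LFProof.AA_zero H g m hg).symm
        _ ≤ ∑ k ∈ Finset.range n, LFProof.AA H g m k :=
          Finset.single_le_sum (fun k _ => zero_le) (Finset.mem_range.2 hn)
    have h2 : m ≤ mseq H g m n := by
      rw [LFProof.mseq_eq]
      calc m = m * 1 := (mul_one m).symm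
        _ ≤ m * ∑ k ∈ Finset.range n, LFProof.AA H g m k := mul_le_mul_right h1 m
    intro h0
    rw [h0] at h2
    exact hm.ne' (le_antisymm h2 zero_le)
  exact ⟨(LFProof.part1 H g m hH hg hm' n).2 i,
    LFProof.part2 H g m hH hg hm' n hne0 i⟩
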